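/- Two-dimensional Gronwall inequality: Let y, k : [0,S] × [0,T] → ℝ be nonnegative continuous functions and C ≥ 0 a constant. If y(s,t) ≤ C + ∫₀ˢ ∫₀ᵗ k(σ,τ) y(σ,τ) dτ dσ for all (s,t) ∈ [0,S] × [0,T], then y(s,t) ≤ C · exp(∫₀ˢ ∫₀ᵗ k(σ,τ) dτ dσ) for all (s,t) ∈ [0,S] × [0,T]. -/

import Mathlib

open Set intervalIntegral MeasureTheory Real

lemma gronwall_2d_aux
    (S T : ℝ) (hS : 0 < S) (hT : 0 < T)
    (y k : ℝ × ℝ → ℝ) (C : ℝ) (hC : 0 ≤ C)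
    (hy : Continuous y) (hk : Continuous k)
    (hy0 : ∀ p, 0 ≤ y p) (hk0 : ∀ p, 0 ≤ k p)
    (hyp : ∀ s ∈ Set.Icc 0 S, ∀ t ∈ Set.Icc 0 T,
      y (s, t) ≤ C + ∫ σ in (0:ℝ)..s, ∫ τ in (0:ℝ)..t, k (σ, τ) * y (σ, τ)) :
    ∀ s ∈ Set.Icc 0 S, ∀ t ∈ Set.Icc 0 T,
      y (s, t) ≤ C * Real.exp (∫ σ in (0:ℝ)..s, ∫ τ in (0:ℝ)..t, k (σ, τ)) := by
  intro s hs t ht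
  set F : ℝ → ℝ := fun σ => ∫ τ in (0:ℝ)..t, k (σ, τ) * y (σ, τ) with hF
  set K : ℝ → ℝ := fun σ => ∫ τ in (0:ℝ)..t, k (σ, τ) with hK
  have hky : Continuous fun p : ℝ × ℝ => k p * y p := hk.mul hy
  have hFc : Continuous F := by
    have := intervalIntegral.continuous_parametric_intervalIntegral_of_continuous'
      (f := fun σ τ => k (σ, τ) * y (σ, τ)) (μ := volume) (by fun_prop) 0 t
    exact this
  have hKc : Continuous K := by
    have := intervalIntegral.continuous_parametric_intervalIntegral_of_continuous'
      (f := fun σ τ => k (σ, τ)) (μ := volume) (by fun_prop) 0 t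
    exact this
  have hF0 : ∀ σ, 0 ≤ F σ := fun σ =>
    intervalIntegral.integral_nonneg ht.1 (fun τ _ => mul_nonneg (hk0 _) (hy0 _))
  have hK0 : ∀ σ, 0 ≤ K σ := fun σ =>
    intervalIntegral.integral_nonneg ht.1 (fun τ _ => hk0 _)
  set φ : ℝ → ℝ := fun s => C + ∫ σ in (0:ℝ)..s, F σ with hφ
  set I : ℝ → ℝ := fun s => ∫ σ in (0:ℝ)..s, K σ with hI
  -- key bound
  have key : ∀ a ∈ Set.Icc (0:ℝ) S, F a ≤ K a * φ a := by
    intro a ha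
    have hφa : ∀ τ ∈ Set.Icc (0:ℝ) t, y (a, τ) ≤ φ a := by
      intro τ hτ
      have hτT : τ ∈ Set.Icc (0:ℝ) T := ⟨hτ.1, hτ.2.trans ht.2⟩
      refine (hyp a ha τ hτT).trans ?_
      have inner : ∀ σ : ℝ, (∫ x in (0:ℝ)..τ, k (σ, x) * y (σ, x)) ≤
          ∫ x in (0:ℝ)..t, k (σ, x) * y (σ, x) := by
        intro σ
        apply intervalIntegral.integral_mono_interval le_rfl hτ.1 hτ.2
        · filter_upwards with x using mul_nonneg (hk0 _) (hy0 _)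
        · exact (hky.comp (by fun_prop)).intervalIntegrable 0 t
      have houter : (∫ σ in (0:ℝ)..a, ∫ x in (0:ℝ)..τ, k (σ, x) * y (σ, x)) ≤
          ∫ σ in (0:ℝ)..a, F σ := by
        apply intervalIntegral.integral_mono_on ha.1
        · exact (intervalIntegral.continuous_parametric_intervalIntegral_of_continuous'
            (f := fun σ x => k (σ, x) * y (σ, x)) (μ := volume) (by fun_prop) 0 τ).intervalIntegrable 0 a
        · exact hFc.intervalIntegrable 0 a
        · exact fun σ _ => inner σ
      have hφa' : φ a = C + ∫ σ in (0:ℝ)..a, F σ := rfl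
      linarith
    have hle : ∀ τ ∈ Set.Icc (0:ℝ) t, k (a, τ) * y (a, τ) ≤ k (a, τ) * φ a := by
      intro τ hτ
      exact mul_le_mul_of_nonneg_left (hφa τ hτ) (hk0 _)
    calc F a ≤ ∫ τ in (0:ℝ)..t, k (a, τ) * φ a := by
          apply intervalIntegral.integral_mono_on ht.1
          · exact ((hky.comp (by fun_prop : Continuous fun τ : ℝ => (a, τ)))).intervalIntegrable 0 t
          · exact (((hk.comp (by fun_prop : Continuous fun τ : ℝ => (a, τ)))).mul continuous_const).intervalIntegrable 0 t
          · exact hle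
      _ = K a * φ a := by rw [intervalIntegral.integral_mul_const]
  -- derivatives
  have hφd : ∀ a : ℝ, HasDerivAt φ (F a) a := by
    intro a
    have := (intervalIntegral.integral_hasDerivAt_right
      (hFc.intervalIntegrable 0 a)
      (hFc.stronglyMeasurableAtFilter volume (nhds a)) hFc.continuousAt)
    exact this.const_add C
  have hId : ∀ a : ℝ, HasDerivAt I (K a) a := by
    intro a
    exact (intervalIntegral.integral_hasDerivAt_right
      (hKc.intervalIntegrable 0 a)
      (hKc.stronglyMeasurableAtFilter volume (nhds a)) hKc.continuousAt)
  set h : ℝ → ℝ := fun a => φ a * Real.exp (-(I a)) with hh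
  have hhd : ∀ a : ℝ, HasDerivAt h ((F a - K a * φ a) * Real.exp (-(I a))) a := by
    intro a
    have hE : HasDerivAt (fun a => Real.exp (-(I a))) (Real.exp (-(I a)) * (-(K a))) a :=
      ((hId a).neg).exp
    have : HasDerivAt (fun x => φ x * Real.exp (-(I x))) (F a * Real.exp (-(I a)) + φ a * (Real.exp (-(I a)) * (-(K a)))) a :=
      (hφd a).mul hE
    convert this using 1
    ring
  have hmono : AntitoneOn h (Set.Icc 0 S) := by
    apply antitoneOn_of_deriv_nonpos (convex_Icc 0 S)
    · exact fun a _ => ((hhd a).continuousAt).continuousWithinAt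
    · exact fun a _ => ((hhd a).differentiableAt).differentiableWithinAt
    · intro a haI
      rw [interior_Icc] at haI
      rw [(hhd a).deriv]
      have := key a ⟨haI.1.le, haI.2.le⟩
      have hpos := Real.exp_pos (-(I a))
      nlinarith
  have h0 : h 0 = C := by simp [hh, hφ, hI]
  have hsle : h s ≤ C := by
    rw [← h0]
    exact hmono ⟨le_rfl, hS.le⟩ hs hs.1
  have hφs : φ s ≤ C * Real.exp (I s) := by
    have := mul_le_mul_of_nonneg_right hsle (Real.exp_pos (I s)).le
    rw [hh] at this
    simp only at this
    rwa [mul_assoc, ← Real.exp_add, neg_add_cancel, Real.exp_zero, mul_one] at this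
  exact (hyp s hs t ht).trans hφs

theorem gronwall_2d
    (S T : ℝ) (hS : 0 < S) (hT : 0 < T)
    (y k : ℝ × ℝ → ℝ) (C : ℝ) (hC : 0 ≤ C)
    (hy_cont : ContinuousOn y (Set.Icc 0 S ×ˢ Set.Icc 0 T))
    (hk_cont : ContinuousOn k (Set.Icc 0 S ×ˢ Set.Icc 0 T))
    (hy_nonneg : ∀ s ∈ Set.Icc 0 S, ∀ t ∈ Set.Icc 0 T, 0 ≤ y (s, t))
    (hk_nonneg : ∀ s ∈ Set.Icc 0 S, ∀ t ∈ Set.Icc 0 T, 0 ≤ k (s, t))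
    (hyp : ∀ s ∈ Set.Icc 0 S, ∀ t ∈ Set.Icc 0 T,
      y (s, t) ≤ C + ∫ σ in (0:ℝ)..s, ∫ τ in (0:ℝ)..t, k (σ, τ) * y (σ, τ)) :
    ∀ s ∈ Set.Icc 0 S, ∀ t ∈ Set.Icc 0 T,
      y (s, t) ≤ C * Real.exp (∫ σ in (0:ℝ)..s, ∫ τ in (0:ℝ)..t, k (σ, τ)) := by
  set proj : ℝ × ℝ → ℝ × ℝ := fun p => (min (max p.1 0) S, min (max p.2 0) T) with hproj
  have hprojc : Continuous proj := by fun_prop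
  have hprojmem : ∀ p, proj p ∈ Set.Icc 0 S ×ˢ Set.Icc 0 T := by
    intro p
    constructor
    · exact ⟨le_min (le_max_right _ _) hS.le, min_le_right _ _⟩
    · exact ⟨le_min (le_max_right _ _) hT.le, min_le_right _ _⟩
  have hprojeq : ∀ p ∈ Set.Icc 0 S ×ˢ Set.Icc 0 T, proj p = p := by
    rintro ⟨a, b⟩ ⟨⟨h1, h2⟩, ⟨h3, h4⟩⟩
    simp only [hproj, Prod.mk.injEq]
    constructor
    · rw [max_eq_left h1, min_eq_left h2]
    · rw [max_eq_left h3, min_eq_left h4]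
  set y' : ℝ × ℝ → ℝ := fun p => y (proj p) with hy'
  set k' : ℝ × ℝ → ℝ := fun p => k (proj p) with hk'
  have hy'c : Continuous y' := hy_cont.comp_continuous hprojc hprojmem
  have hk'c : Continuous k' := hk_cont.comp_continuous hprojc hprojmem
  have hy'eq : ∀ p ∈ Set.Icc (0:ℝ) S ×ˢ Set.Icc (0:ℝ) T, y' p = y p := by
    intro p hp; simp only [hy']; rw [hprojeq p hp]
  have hk'eq : ∀ p ∈ Set.Icc (0:ℝ) S ×ˢ Set.Icc (0:ℝ) T, k' p = k p := by
    intro p hp; simp only [hk']; rw [hprojeq p hp]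
  have hy'0 : ∀ p, 0 ≤ y' p := fun p =>
    hy_nonneg _ (hprojmem p).1 _ (hprojmem p).2
  have hk'0 : ∀ p, 0 ≤ k' p := fun p =>
    hk_nonneg _ (hprojmem p).1 _ (hprojmem p).2
  -- integral congruence
  have hint : ∀ s ∈ Set.Icc (0:ℝ) S, ∀ t ∈ Set.Icc (0:ℝ) T,
      (∫ σ in (0:ℝ)..s, ∫ τ in (0:ℝ)..t, k' (σ, τ) * y' (σ, τ)) =
      ∫ σ in (0:ℝ)..s, ∫ τ in (0:ℝ)..t, k (σ, τ) * y (σ, τ) := by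
    intro s hs t ht
    apply intervalIntegral.integral_congr
    intro σ hσ
    rw [Set.uIcc_of_le hs.1] at hσ
    have hσS : σ ∈ Set.Icc (0:ℝ) S := ⟨hσ.1, hσ.2.trans hs.2⟩
    apply intervalIntegral.integral_congr
    intro τ hτ
    rw [Set.uIcc_of_le ht.1] at hτ
    have hτT : τ ∈ Set.Icc (0:ℝ) T := ⟨hτ.1, hτ.2.trans ht.2⟩
    have hm : (σ, τ) ∈ Set.Icc (0:ℝ) S ×ˢ Set.Icc (0:ℝ) T := ⟨hσS, hτT⟩
    simp only []
    rw [hy'eq _ hm, hk'eq _ hm]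
  have hintk : ∀ s ∈ Set.Icc (0:ℝ) S, ∀ t ∈ Set.Icc (0:ℝ) T,
      (∫ σ in (0:ℝ)..s, ∫ τ in (0:ℝ)..t, k' (σ, τ)) =
      ∫ σ in (0:ℝ)..s, ∫ τ in (0:ℝ)..t, k (σ, τ) := by
    intro s hs t ht
    apply intervalIntegral.integral_congr
    intro σ hσ
    rw [Set.uIcc_of_le hs.1] at hσ
    have hσS : σ ∈ Set.Icc (0:ℝ) S := ⟨hσ.1, hσ.2.trans hs.2⟩
    apply intervalIntegral.integral_congr
    intro τ hτ
    rw [Set.uIcc_of_le ht.1] at hτ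
    simpa using hk'eq _ ⟨hσS, ⟨hτ.1, hτ.2.trans ht.2⟩⟩
  have hyp' : ∀ s ∈ Set.Icc (0:ℝ) S, ∀ t ∈ Set.Icc (0:ℝ) T,
      y' (s, t) ≤ C + ∫ σ in (0:ℝ)..s, ∫ τ in (0:ℝ)..t, k' (σ, τ) * y' (σ, τ) := by
    intro s hs t ht
    rw [hy'eq _ ⟨hs, ht⟩, hint s hs t ht]
    exact hyp s hs t ht
  have main := gronwall_2d_aux S T hS hT y' k' C hC hy'c hk'c hy'0 hk'0 hyp'
  intro s hs t ht
  have := main s hs t ht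
  rwa [hy'eq _ ⟨hs, ht⟩, hintk s hs t ht] at this
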